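/- Let q0 = 2^s, q = 2q0², and let T̄ be the Sylow 2-subgroup of Sz(q) of order q² with center Z(T̄) = {ψ_{0,c}} of order q. If U ≤ T̄ has order 2^u and its subgroup U₂ of elements of order ≤ 2 has order 2^v, then u ≤ 2v. -/

import Mathlib

/-- The map `ψ_{a,c} : (x, y) ↦ (x + a, a^{2q₀} x + y + c)`, an element of the Sylow
2-subgroup `T̄` of the Suzuki group acting on `F × F`. -/
def suzukiPsi {F : Type*} [Field F] (q0 : ℕ) (a c : F) : Equiv.Perm (F × F) where
  toFun p := (p.1 + a, a ^ (2 * q0) * p.1 + p.2 + c)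
  invFun p := (p.1 - a, p.2 - a ^ (2 * q0) * (p.1 - a) - c)
  left_inv p := by
    refine Prod.ext ?_ ?_ <;> dsimp <;> ring
  right_inv p := by
    refine Prod.ext ?_ ?_ <;> dsimp <;> ring

theorem suzukiPsi_apply {F : Type*} [Field F] (q0 : ℕ) (a c : F) (p : F × F) :
    suzukiPsi q0 a c p = (p.1 + a, a ^ (2 * q0) * p.1 + p.2 + c) := rfl

/-- If `U` is a subgroup of the Sylow 2-subgroup
`T̄ = {ψ_{a,c} : a, c ∈ F_q}` of `Sz(q)` of order `2^u`, and its subgroup of elements of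
order at most 2 has order `2^v`, then `u ≤ 2v`. -/
theorem stmt_15 (s : ℕ) (hs : 1 ≤ s) (q0 q : ℕ) (hq0 : q0 = 2 ^ s) (hq : q = 2 * q0 ^ 2)
    (F : Type*) [Field F] [Fintype F] (hF : Fintype.card F = q)
    (U : Subgroup (Equiv.Perm (F × F)))
    (hUT : ∀ g ∈ U, ∃ a c : F, g = suzukiPsi q0 a c)
    (u v : ℕ)
    (hu : Nat.card U = 2 ^ u)
    (hv : Nat.card {g : Equiv.Perm (F × F) // g ∈ U ∧ g ^ 2 = 1} = 2 ^ v) :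
    u ≤ 2 * v := by
  subst hq0 hq
  set n : ℕ := 2 * 2 ^ s with hn
  have hcard : Fintype.card F = 2 ^ (2 * s + 1) := by
    rw [hF, two_mul s, pow_add, pow_add]; ring
  -- characteristic 2
  obtain ⟨p, hpi⟩ := CharP.exists F
  haveI := hpi
  obtain ⟨m, hprime, hcardp⟩ := FiniteField.card F p
  have hp2 : p = 2 := by
    have hdvd : p ∣ 2 ^ (2 * s + 1) := by
      rw [← hcard, hcardp]; exact dvd_pow_self p m.pos.ne'
    have := Nat.Prime.dvd_of_dvd_pow hprime hdvd
    exact (Nat.prime_dvd_prime_iff_eq hprime Nat.prime_two).mp this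
  subst hp2
  have h2 : ∀ x : F, x + x = 0 := fun x => CharTwo.add_self_eq_zero x
  -- the a-value
  set av : Equiv.Perm (F × F) → F := fun g => (g (0, 0)).1 with hav
  set cv : Equiv.Perm (F × F) → F := fun g => (g (0, 0)).2 with hcv
  have hpsi0 : ∀ a c : F, suzukiPsi (2 ^ s) a c (0, 0) = (a, c) := by
    intro a c; rw [suzukiPsi_apply]; simp
  -- additivity of av on U
  have hadd : ∀ g ∈ U, ∀ h ∈ U, av (g * h) = av g + av h := by
    intro g hg h hh
    obtain ⟨a, c, rfl⟩ := hUT g hg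
    obtain ⟨a', c', rfl⟩ := hUT h hh
    simp only [hav, Equiv.Perm.mul_apply, hpsi0, suzukiPsi_apply]
    ring
  -- square formula
  have hsq : ∀ g ∈ U, (g * g) (0, 0) = (0, av g ^ n * av g) := by
    intro g hg
    obtain ⟨a, c, rfl⟩ := hUT g hg
    simp only [hav, Equiv.Perm.mul_apply, hpsi0, suzukiPsi_apply, hn]
    rw [h2 a, add_assoc, h2 c, add_zero]
  -- order ≤ 2 characterization
  have hord : ∀ g ∈ U, (g ^ 2 = 1 ↔ av g = 0) := by
    intro g hg
    constructor
    · intro h1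
      have : (g * g) (0, 0) = (0, 0) := by
        rw [← pow_two, h1]; rfl
      rw [hsq g hg] at this
      have h0 : av g ^ n * av g = 0 := by
        have := congrArg Prod.snd this; simpa using this
      rcases mul_eq_zero.mp h0 with h | h
      · exact pow_eq_zero_iff (by positivity) |>.mp h
      · exact h
    · intro h0
      obtain ⟨a, c, rfl⟩ := hUT g hg
      have ha : a = 0 := by
        have : av (suzukiPsi (2 ^ s) a c) = a := by
          simp only [hav, hpsi0]
        rw [this] at h0; exact h0
      subst ha
      have h0 : (0 : F) ^ (2 * 2 ^ s) = 0 := zero_pow (by positivity)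
      rw [pow_two]
      ext p
      · simp only [Equiv.Perm.mul_apply, suzukiPsi_apply, Equiv.Perm.one_apply]
        simp
      · simp only [Equiv.Perm.mul_apply, suzukiPsi_apply, Equiv.Perm.one_apply]
        simp [h0, add_assoc, h2 c]
  -- injectivity of a ↦ a^n * a
  have hinj : ∀ a b : F, a ^ n * a = b ^ n * b → a = b := by
    intro a b hab
    rw [← pow_succ, ← pow_succ] at hab
    rcases eq_or_ne a 0 with rfl | ha
    · rcases eq_or_ne b 0 with rfl | hb
      · rfl
      · exfalso
        rw [zero_pow (Nat.succ_ne_zero n)] at hab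
        exact hb (pow_eq_zero_iff (Nat.succ_ne_zero n) |>.mp hab.symm)
    · rcases eq_or_ne b 0 with rfl | hb
      · exfalso
        rw [zero_pow (Nat.succ_ne_zero n)] at hab
        exact ha (pow_eq_zero_iff (Nat.succ_ne_zero n) |>.mp hab)
      · set x : F := a / b with hx
        have hxne : x ≠ 0 := div_ne_zero ha hb
        have hx1 : x ^ (n + 1) = 1 := by
          rw [hx, div_pow, hab, div_self (pow_ne_zero _ hb)]
        have hnpos : 0 < n := by rw [hn]; positivity
        obtain ⟨m', hm'⟩ : ∃ m', n = m' + 1 := ⟨n - 1, by omega⟩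
        have hexp : (n + 1) * (n - 1) + 1 = 2 * Fintype.card F := by
          have h4 : 2 * Fintype.card F = n * n := by
            rw [hcard, hn, two_mul s, pow_add, pow_succ]; ring
          rw [h4, hm']
          simp only [Nat.add_sub_cancel]
          ring
        have hx3 : x ^ (2 * Fintype.card F) = x := by
          rw [← hexp, pow_succ, pow_mul, hx1, one_pow, one_mul]
        have hx4 : x ^ 2 = x := by
          rw [mul_comm, pow_mul, FiniteField.pow_card] at hx3
          exact hx3
        have hxone : x = 1 := by
          have : x * x = x * 1 := by rw [mul_one, ← pow_two, hx4]
          exact mul_left_cancel₀ hxne this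
        field_simp [hx] at hxone
        rw [hx, div_eq_one_iff_eq hb] at hxone; exact hxone
  -- the homomorphism U →* Multiplicative F
  let f : U →* Multiplicative F :=
    { toFun := fun g => Multiplicative.ofAdd (av g.1)
      map_one' := by
        simp only [hav]
        norm_num
      map_mul' := fun g h => by
        simp only [Subgroup.coe_mul]
        rw [hadd g.1 g.2 h.1 h.2]
        rfl }
  have hfval : ∀ g : U, f g = Multiplicative.ofAdd (av g.1) := fun _ => rfl
  -- Nat.card U = card range * card ker
  have hsplit : Nat.card U = Nat.card f.range * Nat.card f.ker := by
    rw [Subgroup.card_eq_card_quotient_mul_card_subgroup f.ker]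
    congr 1
    exact Nat.card_congr (QuotientGroup.quotientKerEquivRange f).toEquiv
  -- ker ≃ order-2 subtype
  have hker : Nat.card f.ker = 2 ^ v := by
    rw [← hv]
    apply Nat.card_congr
    refine ⟨fun x => ⟨x.1.1, x.1.2, ?_⟩, fun y => ⟨⟨y.1, y.2.1⟩, ?_⟩, ?_, ?_⟩
    · refine (hord _ x.1.2).mpr ?_
      have := x.2
      rw [MonoidHom.mem_ker, hfval, ofAdd_eq_one] at this
      exact this
    · rw [MonoidHom.mem_ker, hfval, ofAdd_eq_one]
      exact (hord _ y.2.1).mp y.2.2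
    · intro x; rfl
    · intro y; rfl
  -- injection range ↪ order-2 subtype
  have hrange : Nat.card f.range ≤ 2 ^ v := by
    rw [← hv]
    have hmap : ∀ x : f.range, ∃ g : U, f g = x.1 := fun x => MonoidHom.mem_range.mp x.2
    let j : f.range → {g : Equiv.Perm (F × F) // g ∈ U ∧ g ^ 2 = 1} := fun x =>
      ⟨((hmap x).choose.1) ^ 2, pow_mem (hmap x).choose.2 2, by
        refine (hord _ (pow_mem (hmap x).choose.2 2)).mpr ?_
        rw [pow_two, hadd _ (hmap x).choose.2 _ (hmap x).choose.2, h2]⟩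
    apply Nat.card_le_card_of_injective j
    intro x y hxy
    have heq : ((hmap x).choose.1) ^ 2 = ((hmap y).choose.1) ^ 2 :=
      congrArg Subtype.val hxy
    have h1 : av ((hmap x).choose.1) ^ n * av ((hmap x).choose.1)
        = av ((hmap y).choose.1) ^ n * av ((hmap y).choose.1) := by
      have e1 := hsq _ (hmap x).choose.2
      have e2 := hsq _ (hmap y).choose.2
      rw [← pow_two] at e1 e2
      rw [heq, e2] at e1
      exact (congrArg Prod.snd e1).symm
    have h3 := hinj _ _ h1
    have hx' := (hmap x).choose_spec
    have hy' := (hmap y).choose_spec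
    apply Subtype.ext
    rw [← hx', ← hy', hfval, hfval, h3]
  -- conclude
  have hfin : 2 ^ u ≤ 2 ^ (2 * v) := by
    rw [← hu, hsplit, hker, two_mul, pow_add]
    exact Nat.mul_le_mul_right _ hrange
  exact (Nat.pow_le_pow_iff_right (by norm_num)).mp hfin
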